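/- Define, for f ∈ (−1, 1), γ(f) = −3f/(2 + √(4 − 3f²)), χ(f) = (1 + 3γ(f)²)/(3 + γ(f)²), η(f) = 8γ(f)²/(3(3 − γ(f)²)), and for a scattering ratio r_s ∈ [0, 1] set ξ(f) = χ(f) + r_s·η(f). Let α = ξ(f) − f·ξ'(f) and β = ξ'(f). Then β² + 4α = (ξ'(f) − 2f)² + 4 r_s (1/3 − χ(f) + f·χ'(f)) + 4(χ(f) − f²) > 0 for every f ∈ (−1, 1); consequently the flux-Jacobian matrix [[0, 1], [α, β]] of the diffusion-free perturbed M₁ system in slab geometry has two distinct real eigenvalues β/2 ± √(β²/4 + α), i.e. the system is strictly hyperbolic wherever |F| < cE. -/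

import Mathlib

/-- The auxiliary variable `γ(f) = −3f/(2 + √(4 − 3f²))` of the slab-geometry `M₁`
closure. -/
noncomputable def gammaM1 (f : ℝ) : ℝ := -3 * f / (2 + Real.sqrt (4 - 3 * f ^ 2))

/-- The Eddington factor `χ(f) = (1 + 3γ(f)²)/(3 + γ(f)²)`. -/
noncomputable def chiM1 (f : ℝ) : ℝ := (1 + 3 * (gammaM1 f) ^ 2) / (3 + (gammaM1 f) ^ 2)

/-- The convective correction coefficient `η(f) = 8γ(f)²/(3(3 − γ(f)²))`. -/
noncomputable def etaM1 (f : ℝ) : ℝ := 8 * (gammaM1 f) ^ 2 / (3 * (3 - (gammaM1 f) ^ 2))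

/-- The total flux coefficient `ξ(f) = χ(f) + r_s·η(f)` of the diffusion-free perturbed
`M₁` model in slab geometry. -/
noncomputable def xiM1 (rs : ℝ) (f : ℝ) : ℝ := chiM1 f + rs * etaM1 f

section PerturbedM1Aux

lemma sfacts (f : ℝ) (hf : f ∈ Set.Ioo (-1:ℝ) 1) :
    1 < Real.sqrt (4 - 3 * f ^ 2) ∧ Real.sqrt (4 - 3 * f ^ 2) ≤ 2 ∧
      Real.sqrt (4 - 3 * f ^ 2) ^ 2 = 4 - 3 * f ^ 2 := by
  obtain ⟨h1, h2⟩ := hf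
  have hf2 : f ^ 2 < 1 := by nlinarith
  have hnn : (0:ℝ) ≤ 4 - 3 * f ^ 2 := by nlinarith
  refine ⟨?_, ?_, Real.sq_sqrt hnn⟩
  · rw [show (1:ℝ) = Real.sqrt 1 by simp]
    exact Real.sqrt_lt_sqrt (by norm_num) (by nlinarith)
  · rw [show (2:ℝ) = Real.sqrt 4 by rw [show (4:ℝ) = 2^2 by norm_num]; exact (Real.sqrt_sq (by norm_num)).symm]
    exact Real.sqrt_le_sqrt (by nlinarith)

lemma chi_eq (f : ℝ) (hf : f ∈ Set.Ioo (-1:ℝ) 1) :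
    chiM1 f = (5 - 2 * Real.sqrt (4 - 3 * f ^ 2)) / 3 := by
  obtain ⟨hs1, hs2, hsq⟩ := sfacts f hf
  set s := Real.sqrt (4 - 3 * f ^ 2) with hs
  have hpos : (0:ℝ) < 2 + s := by linarith
  have hden : (3 : ℝ) + (gammaM1 f) ^ 2 ≠ 0 := by positivity
  unfold chiM1 gammaM1
  rw [div_eq_div_iff (by unfold gammaM1 at hden; exact hden) (by norm_num)]
  field_simp
  nlinarith [hsq, hpos]

lemma eta_eq (f : ℝ) (hf : f ∈ Set.Ioo (-1:ℝ) 1) :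
    etaM1 f = 4 * (2 - Real.sqrt (4 - 3 * f ^ 2)) / (3 * Real.sqrt (4 - 3 * f ^ 2)) := by
  obtain ⟨hs1, hs2, hsq⟩ := sfacts f hf
  set s := Real.sqrt (4 - 3 * f ^ 2) with hs
  have hpos : (0:ℝ) < 2 + s := by linarith
  have hden : 3 * ((3:ℝ) - (gammaM1 f) ^ 2) ≠ 0 := by
    have : (gammaM1 f)^2 = 9 * f^2 / (2+s)^2 := by
      unfold gammaM1; rw [← hs, div_pow]; ring_nf
    rw [this]
    have h9 : 9 * f^2 = 3 * (2+s) * (2-s) := by nlinarith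
    have : (3:ℝ) - 9 * f^2 / (2+s)^2 = 6 * s / (2 + s) := by
      rw [h9]; field_simp; ring
    rw [this]; positivity
  unfold etaM1 gammaM1
  rw [div_eq_div_iff (by unfold gammaM1 at hden; exact hden) (by positivity)]
  field_simp
  nlinarith [hsq, hpos, sq_nonneg (2+s), mul_pos hpos (show (0:ℝ) < s by linarith)]

lemma hasDerivAt_sM1 (f : ℝ) (hf : f ∈ Set.Ioo (-1:ℝ) 1) :
    HasDerivAt (fun x => Real.sqrt (4 - 3 * x ^ 2))
      (-3 * f / Real.sqrt (4 - 3 * f ^ 2)) f := by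
  obtain ⟨hs1, hs2, hsq⟩ := sfacts f hf
  have hne : (4 : ℝ) - 3 * f ^ 2 ≠ 0 := by nlinarith
  have hinner : HasDerivAt (fun x : ℝ => 4 - 3 * x ^ 2) (-6 * f) f := by
    have := ((hasDerivAt_pow 2 f).const_mul (3:ℝ)).const_sub 4
    refine this.congr_deriv ?_; ring
  have := (Real.hasDerivAt_sqrt hne).comp f hinner
  refine this.congr_deriv ?_
  field_simp
  ring

lemma hasDerivAt_chiM1 (f : ℝ) (hf : f ∈ Set.Ioo (-1:ℝ) 1) :
    HasDerivAt chiM1 (2 * f / Real.sqrt (4 - 3 * f ^ 2)) f := by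
  obtain ⟨hs1, hs2, hsq⟩ := sfacts f hf
  have hs0 : Real.sqrt (4 - 3 * f ^ 2) ≠ 0 := by linarith
  have hform : HasDerivAt (fun x => (5 - 2 * Real.sqrt (4 - 3 * x ^ 2)) / 3)
      (2 * f / Real.sqrt (4 - 3 * f ^ 2)) f := by
    have := (((hasDerivAt_sM1 f hf).const_mul (2:ℝ)).const_sub (5:ℝ)).div_const 3
    refine this.congr_deriv ?_
    field_simp
  refine hform.congr_of_eventuallyEq ?_
  filter_upwards [isOpen_Ioo.mem_nhds hf] with x hx
  exact chi_eq x hx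

lemma hasDerivAt_etaM1 (f : ℝ) (hf : f ∈ Set.Ioo (-1:ℝ) 1) :
    HasDerivAt etaM1 (8 * f / Real.sqrt (4 - 3 * f ^ 2) ^ 3) f := by
  obtain ⟨hs1, hs2, hsq⟩ := sfacts f hf
  set s := Real.sqrt (4 - 3 * f ^ 2) with hs
  have hs0 : s ≠ 0 := by intro h; rw [h] at hs1; linarith
  have hform : HasDerivAt (fun x => 4 * (2 - Real.sqrt (4 - 3 * x ^ 2)) / (3 * Real.sqrt (4 - 3 * x ^ 2)))
      (8 * f / s ^ 3) f := by
    have hnum : HasDerivAt (fun x => 4 * (2 - Real.sqrt (4 - 3 * x ^ 2)))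
        (4 * -(-3 * f / s)) f :=
      ((hasDerivAt_sM1 f hf).const_sub 2).const_mul 4
    have hden : HasDerivAt (fun x => 3 * Real.sqrt (4 - 3 * x ^ 2))
        (3 * (-3 * f / s)) f := (hasDerivAt_sM1 f hf).const_mul 3
    have := hnum.div hden (by simpa using mul_ne_zero (three_ne_zero) hs0)
    rw [← hs] at this
    refine this.congr_deriv ?_
    field_simp
    ring
  refine hform.congr_of_eventuallyEq ?_
  filter_upwards [isOpen_Ioo.mem_nhds hf] with x hx
  exact eta_eq x hx

end PerturbedM1Aux

/-- Strict hyperbolicity of the diffusion-free perturbed `M₁` model in slab geometry: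
for a scattering ratio `r_s ∈ [0,1]` and every normalized flux `f ∈ (−1, 1)`, with
`α = ξ(f) − f·ξ'(f)` and `β = ξ'(f)`, the radical satisfies
`β² + 4α = (ξ'(f) − 2f)² + 4 r_s (1/3 − χ(f) + f·χ'(f)) + 4(χ(f) − f²) > 0`, hence the
flux-Jacobian `[[0, 1], [α, β]]` has two distinct real eigenvalues `β/2 ± √(β²/4 + α)`. -/
theorem perturbedM1_strictly_hyperbolic (rs : ℝ) (hrs : rs ∈ Set.Icc (0 : ℝ) 1) :
    ∀ f : ℝ, f ∈ Set.Ioo (-1 : ℝ) 1 →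
      (deriv (xiM1 rs) f) ^ 2 + 4 * (xiM1 rs f - f * deriv (xiM1 rs) f)
          = (deriv (xiM1 rs) f - 2 * f) ^ 2
            + 4 * rs * (1 / 3 - chiM1 f + f * deriv chiM1 f)
            + 4 * (chiM1 f - f ^ 2) ∧
      0 < (deriv (xiM1 rs) f) ^ 2 + 4 * (xiM1 rs f - f * deriv (xiM1 rs) f) ∧
      (deriv (xiM1 rs) f / 2
          + Real.sqrt ((deriv (xiM1 rs) f) ^ 2 / 4 + (xiM1 rs f - f * deriv (xiM1 rs) f)))
        ≠ (deriv (xiM1 rs) f / 2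
          - Real.sqrt ((deriv (xiM1 rs) f) ^ 2 / 4 + (xiM1 rs f - f * deriv (xiM1 rs) f))) ∧
      Matrix.det
        ((deriv (xiM1 rs) f / 2
            + Real.sqrt ((deriv (xiM1 rs) f) ^ 2 / 4
              + (xiM1 rs f - f * deriv (xiM1 rs) f))) • (1 : Matrix (Fin 2) (Fin 2) ℝ)
          - !![0, 1; xiM1 rs f - f * deriv (xiM1 rs) f, deriv (xiM1 rs) f]) = 0 ∧
      Matrix.det
        ((deriv (xiM1 rs) f / 2
            - Real.sqrt ((deriv (xiM1 rs) f) ^ 2 / 4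
              + (xiM1 rs f - f * deriv (xiM1 rs) f))) • (1 : Matrix (Fin 2) (Fin 2) ℝ)
          - !![0, 1; xiM1 rs f - f * deriv (xiM1 rs) f, deriv (xiM1 rs) f]) = 0 := by
  intro f hf
  obtain ⟨hs1, hs2, hsq⟩ := sfacts f hf
  set s := Real.sqrt (4 - 3 * f ^ 2) with hs
  have hs0 : (0:ℝ) < s := by linarith
  have hχ := chi_eq f hf
  have hη := eta_eq f hf
  have hdχ := hasDerivAt_chiM1 f hf
  have hdξ : HasDerivAt (xiM1 rs) (2 * f / s + rs * (8 * f / s ^ 3)) f :=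
    hdχ.add ((hasDerivAt_etaM1 f hf).const_mul rs)
  have hβ : deriv (xiM1 rs) f = 2 * f / s + rs * (8 * f / s ^ 3) := hdξ.deriv
  have hχ' : deriv chiM1 f = 2 * f / s := hdχ.deriv
  have hξv : xiM1 rs f = (5 - 2 * s) / 3 + rs * (4 * (2 - s) / (3 * s)) := by
    unfold xiM1; rw [hχ, hη]
  have hkey : 4 * (2 - s) / (3 * s) = 1 / 3 - (5 - 2 * s) / 3 + f * (2 * f / s) := by
    field_simp
    linear_combination (-2 : ℝ) * hsq
  have hχf : (5 - 2 * s) / 3 - f ^ 2 = (s - 1) ^ 2 / 3 := by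
    linear_combination (-1/3 : ℝ) * hsq
  have hId : (deriv (xiM1 rs) f) ^ 2 + 4 * (xiM1 rs f - f * deriv (xiM1 rs) f)
      = (deriv (xiM1 rs) f - 2 * f) ^ 2
        + 4 * rs * (1 / 3 - chiM1 f + f * deriv chiM1 f)
        + 4 * (chiM1 f - f ^ 2) := by
    rw [hβ, hχ', hχ, hξv]
    linear_combination (4 * rs) * hkey
  have hmid : 0 ≤ 1 / 3 - (5 - 2 * s) / 3 + f * (2 * f / s) := by
    rw [← hkey]
    apply div_nonneg (by nlinarith) (by positivity)
  have hDpos : 0 < (deriv (xiM1 rs) f) ^ 2 + 4 * (xiM1 rs f - f * deriv (xiM1 rs) f) := by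
    rw [hId, hβ, hχ', hχ]
    nlinarith [sq_nonneg (2 * f / s + rs * (8 * f / s ^ 3) - 2 * f),
      mul_nonneg hrs.1 hmid, hχf, pow_pos (show (0:ℝ) < s - 1 by linarith) 2]
  have harg : 0 < (deriv (xiM1 rs) f) ^ 2 / 4 + (xiM1 rs f - f * deriv (xiM1 rs) f) := by
    nlinarith [hDpos, sq_nonneg (deriv (xiM1 rs) f)]
  have ht : 0 < Real.sqrt ((deriv (xiM1 rs) f) ^ 2 / 4 + (xiM1 rs f - f * deriv (xiM1 rs) f)) :=
    Real.sqrt_pos.mpr harg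
  have ht2 : Real.sqrt ((deriv (xiM1 rs) f) ^ 2 / 4 + (xiM1 rs f - f * deriv (xiM1 rs) f)) ^ 2
      = (deriv (xiM1 rs) f) ^ 2 / 4 + (xiM1 rs f - f * deriv (xiM1 rs) f) :=
    Real.sq_sqrt harg.le
  refine ⟨hId, hDpos, by intro h; linarith, ?_, ?_⟩ <;>
  · simp only [Matrix.det_fin_two, Matrix.sub_apply, Matrix.smul_apply, Matrix.one_apply,
      Matrix.of_apply, Matrix.cons_val', Matrix.cons_val_zero, Matrix.cons_val_one,
      Matrix.head_cons, Matrix.head_fin_const, Matrix.empty_val', Matrix.cons_val_fin_one,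
      smul_eq_mul, if_true, if_false]
    norm_num
    linear_combination ht2
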